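/- Let B be a d×d positive definite real matrix, let C be a d×d positive semidefinite real matrix, and set A = B + C. Then for every x ∈ ℝ^d, (xᵀAx)·det(B) ≤ det(A)·(xᵀBx); in particular, for every x ≠ 0, xᵀAx / xᵀBx ≤ det(A)/det(B). -/

import Mathlib

open Matrix Finset


lemma core_ineq {d : ℕ} {D : Matrix (Fin d) (Fin d) ℝ} (hD : D.PosSemidef) (y : Fin d → ℝ) :
    y ⬝ᵥ ((1 + D) *ᵥ y) ≤ (1 + D).det * (y ⬝ᵥ y) := by
  classical
  have hH := hD.1
  set U : Matrix (Fin d) (Fin d) ℝ := (hH.eigenvectorUnitary : Matrix (Fin d) (Fin d) ℝ) with hU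
  have hUmem : U ∈ Matrix.unitaryGroup (Fin d) ℝ := (hH.eigenvectorUnitary).2
  have hUU : star U * U = 1 := hUmem.1
  have hUU' : U * star U = 1 := hUmem.2
  have hspec : D = U * diagonal hH.eigenvalues * star U := by
    have := hH.spectral_theorem
    simpa [hU] using this
  set lam := hH.eigenvalues with hlam
  set c : Fin d → ℝ := star U *ᵥ y with hc
  have key : ∀ M : Matrix (Fin d) (Fin d) ℝ, y ⬝ᵥ ((U * M * star U) *ᵥ y) = c ⬝ᵥ (M *ᵥ c) := by
    intro M
    rw [← mulVec_mulVec, ← mulVec_mulVec, dotProduct_mulVec]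
    congr 1
    rw [hc, star_eq_conjTranspose, conjTranspose_eq_transpose_of_trivial, mulVec_transpose]
  have hone : (1 : Matrix (Fin d) (Fin d) ℝ) + D = U * (1 + diagonal lam) * star U := by
    rw [mul_add, add_mul, mul_one, hUU', hspec]
  have hdet : (1 + D).det = ∏ i, (1 + lam i) := by
    rw [hone, det_mul, det_mul, mul_comm (det U), mul_assoc, ← det_mul, hUU', det_one, mul_one]
    have : (1 : Matrix (Fin d) (Fin d) ℝ) + diagonal lam = diagonal (fun i => 1 + lam i) := by
      rw [← diagonal_one, diagonal_add]
    rw [this, det_diagonal]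
  have hquad : y ⬝ᵥ ((1 + D) *ᵥ y) = ∑ i, (1 + lam i) * (c i)^2 := by
    rw [hone, key]
    have : (1 : Matrix (Fin d) (Fin d) ℝ) + diagonal lam = diagonal (fun i => 1 + lam i) := by
      rw [← diagonal_one, diagonal_add]
    rw [this]
    simp only [dotProduct, mulVec_diagonal, add_mulVec, one_mulVec, Pi.add_apply]
    exact Finset.sum_congr rfl fun i _ => by ring
  have hyy : y ⬝ᵥ y = ∑ i, (c i)^2 := by
    have : c ⬝ᵥ ((1 : Matrix (Fin d) (Fin d) ℝ) *ᵥ c) = y ⬝ᵥ ((U * 1 * star U) *ᵥ y) := (key 1).symm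
    rw [mul_one, hUU'] at this
    simpa [dotProduct, sq] using this.symm
  rw [hquad, hyy, hdet, Finset.mul_sum]
  apply Finset.sum_le_sum
  intro i _
  have hli : 0 ≤ lam i := hD.eigenvalues_nonneg i
  have h1 : (1 + lam i) ≤ ∏ j, (1 + lam j) := by
    calc 1 + lam i = ∏ j, (if j = i then 1 + lam i else 1) := by simp
      _ ≤ ∏ j, (1 + lam j) := by
          refine Finset.prod_le_prod (fun j _ => ?_) (fun j _ => ?_) <;>
            by_cases h : j = i <;> simp [h] <;>
            linarith [hD.eigenvalues_nonneg j, hD.eigenvalues_nonneg i]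
  nlinarith [sq_nonneg (c i)]

/-- For `B` positive definite, `C` positive semidefinite and `A = B + C`,
the quadratic-form ratio is bounded by the determinant ratio. -/
theorem quadratic_det_inequality {d : ℕ} (B C A : Matrix (Fin d) (Fin d) ℝ)
    (hB : B.PosDef) (hC : C.PosSemidef) (hA : A = B + C) :
    (∀ x : Fin d → ℝ, (x ⬝ᵥ (A *ᵥ x)) * B.det ≤ A.det * (x ⬝ᵥ (B *ᵥ x))) ∧
    (∀ x : Fin d → ℝ, x ≠ 0 →
      (x ⬝ᵥ (A *ᵥ x)) / (x ⬝ᵥ (B *ᵥ x)) ≤ A.det / B.det) := by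
  classical
  have hdetB : 0 < B.det := hB.det_pos
  -- square root of B
  open scoped MatrixOrder in set S := CFC.sqrt B with hSdef
  open scoped MatrixOrder in have hSpsd : S.PosSemidef := (CFC.sqrt_nonneg B).posSemidef
  open scoped MatrixOrder in have hSS : S * S = B := CFC.sqrt_mul_sqrt_self B hB.posSemidef.nonneg
  have hdetS : 0 < S.det := by
    have h2 : S.det * S.det = B.det := by rw [← det_mul, hSS]
    have h0 : 0 ≤ S.det := by
      rw [hSpsd.1.det_eq_prod_eigenvalues]
      exact Finset.prod_nonneg fun i _ => hSpsd.eigenvalues_nonneg i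
    nlinarith
  have hSinv : Invertible S := invertibleOfIsUnitDet S (isUnit_iff_ne_zero.2 hdetS.ne')
  have hSsymm : Sᵀ = S := by
    have := hSpsd.1
    rwa [IsHermitian, conjTranspose_eq_transpose_of_trivial] at this
  set D := S⁻¹ * C * S⁻¹ with hD
  have hSinvsymm : (S⁻¹)ᵀ = S⁻¹ := by rw [transpose_nonsing_inv, hSsymm]
  have hDpsd : D.PosSemidef := by
    have : D = S⁻¹ * C * (S⁻¹)ᴴ := by
      rw [conjTranspose_eq_transpose_of_trivial, hSinvsymm]
    rw [this]
    exact hC.mul_mul_conjTranspose_same S⁻¹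
  have hdu : IsUnit S.det := isUnit_iff_ne_zero.2 hdetS.ne'
  have hSDS : S * D * S = C := by
    rw [hD, Matrix.mul_assoc, Matrix.mul_assoc, Matrix.nonsing_inv_mul S hdu, Matrix.mul_one,
      ← Matrix.mul_assoc, Matrix.mul_nonsing_inv S hdu, Matrix.one_mul]
  have hAsplit : A = S * (1 + D) * S := by
    rw [hA, mul_add, add_mul, mul_one, hSS, hSDS]
  have main : ∀ x : Fin d → ℝ, (x ⬝ᵥ (A *ᵥ x)) * B.det ≤ A.det * (x ⬝ᵥ (B *ᵥ x)) := by
    intro x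
    set y := S *ᵥ x with hy
    have hxA : x ⬝ᵥ (A *ᵥ x) = y ⬝ᵥ ((1 + D) *ᵥ y) := by
      rw [hAsplit, ← mulVec_mulVec, ← mulVec_mulVec, dotProduct_mulVec, ← mulVec_transpose, hSsymm]
    have hxB : x ⬝ᵥ (B *ᵥ x) = y ⬝ᵥ y := by
      rw [← hSS, ← mulVec_mulVec, dotProduct_mulVec, ← mulVec_transpose, hSsymm]
    have hdetA : A.det = B.det * (1 + D).det := by
      rw [hAsplit, det_mul, det_mul, ← hSS, det_mul]; ring
    rw [hxA, hxB, hdetA]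
    have := core_ineq hDpsd y
    nlinarith
  refine ⟨main, fun x hx => ?_⟩
  have hxB : 0 < x ⬝ᵥ (B *ᵥ x) := by simpa using hB.dotProduct_mulVec_pos hx
  have hxBre : 0 < x ⬝ᵥ (B *ᵥ x) := hxB
  rw [div_le_div_iff₀ hxBre hdetB]
  exact main x
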